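/- With G_n and Ĝ_n as in the binary-tree construction and t_n defined by t_1 = 2, t_{n+1} = 4t_n + 2: for every graph F containing Ĝ_n as an induced subgraph with no edges between V(G_n) and V(F) \ V(G_n), and for every zero forcing set P of F, one has |V(G_n) ∩ P| ≥ t_n. -/

import Mathlib

/-- The zero forcing closure: vertices that eventually become black when the
vertices of `S` are initially black and we repeatedly apply the rule that a
white vertex `u` becomes black if it is the unique white neighbor of some black
vertex `v` (we say `v` forces `u`). -/
inductive ZFClosure {V : Type*} (G : SimpleGraph V) (S : Set V) : V → Prop
  | init (v : V) : v ∈ S → ZFClosure G S v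
  | force (u v : V) : G.Adj v u → ZFClosure G S v →
      (∀ w, G.Adj v w → w ≠ u → ZFClosure G S w) → ZFClosure G S u

/-- `S` is a zero forcing set of `G` if every vertex eventually becomes black. -/
def IsZeroForcingSet {V : Type*} (G : SimpleGraph V) (S : Set V) : Prop :=
  ∀ v, ZFClosure G S v

/-- The zero forcing number `Z(G)`: the minimum cardinality of a zero forcing set. -/
noncomputable def zeroForcingNumber {V : Type*} (G : SimpleGraph V) : ℕ :=
  sInf {k | ∃ S : Set V, S.ncard = k ∧ IsZeroForcingSet G S}

/-- One-sided edge relation of the subdivided `K₄`: vertices `a b c d e = 0 1 2 3 4`,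
edges `ad, db, ac, cb, ae, eb, ce`; here `d = 3` is the subdivision vertex. -/
def subK4Rel : Fin 5 → Fin 5 → Prop := fun x y =>
  (x, y) ∈ [((0 : Fin 5), (3 : Fin 5)), (3, 1), (0, 2), (2, 1), (0, 4), (4, 1), (2, 4)]

/-- The subdivided `K₄`: the complete graph on `{a, b, c, e}` with the edge `ab`
replaced by the path `a–d–b`. -/
def subK4 : SimpleGraph (Fin 5) := SimpleGraph.fromRel subK4Rel

/-- Vertices of the graph `G_{n+1}` of the binary-tree construction: `GV n` is
obtained from the complete binary tree `B_{2(n+1)-1}` by replacing every leaf with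
a subdivided `K₄` (attached via its subdivision vertex `3`).  `GV 0` is a single
subdivided `K₄`; `GV (n+1)` consists of a root, two middle vertices `mid b`
(the vertices `y_n^1, y_n^2`), and four copies `child b c` of `GV n`. -/
inductive GV : ℕ → Type
  | base : Fin 5 → GV 0
  | root {n : ℕ} : GV (n + 1)
  | mid {n : ℕ} : Bool → GV (n + 1)
  | child {n : ℕ} : Bool → Bool → GV n → GV (n + 1)

/-- The root `r_{n+1}` of `G_{n+1}` (for a single subdivided `K₄` it is the
subdivision vertex `3`). -/
def rootV : (n : ℕ) → GV n
  | 0 => .base 3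
  | _ + 1 => .root

/-- One-sided edge relation of `G_{n+1}`: the root is joined to the two middle
vertices, each middle vertex is joined to the roots of its two copies of the
previous construction, and each copy keeps its own edges. -/
def gAdj : {n : ℕ} → GV n → GV n → Prop
  | 0, .base i, .base j => subK4Rel i j
  | _ + 1, .root, .mid _ => True
  | n + 1, .mid b, .child b' _ x => b = b' ∧ x = rootV n
  | _ + 1, .child b c x, .child b' c' y => b = b' ∧ c = c' ∧ gAdj x y
  | _ + 1, _, _ => False

/-- The graph `G_{n+1}` of the binary-tree construction (the complete binary tree
`B_{2(n+1)-1}` with every leaf replaced by a subdivided `K₄`). -/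
def Gtree (n : ℕ) : SimpleGraph (GV n) := SimpleGraph.fromRel gAdj

/-- One-sided edge relation of `Ĝ_{n+1}`: `G_{n+1}` together with one extra pendant
vertex `none` (the vertex `y_{n+1}`) attached to the root. -/
def hatAdj (n : ℕ) : Option (GV n) → Option (GV n) → Prop
  | some x, some y => gAdj x y
  | none, some x => x = rootV n
  | _, _ => False

/-- The graph `Ĝ_{n+1}`: `G_{n+1}` with a new pendant vertex attached to the root. -/
def hatGtree (n : ℕ) : SimpleGraph (Option (GV n)) := SimpleGraph.fromRel (hatAdj n)

/-- The sequence `t_{n+1}` (0-indexed): `t 0 = t_1 = 2` and `t (n+1) = 4 * t n + 2`. -/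
def tseq : ℕ → ℕ
  | 0 => 2
  | n + 1 => 4 * tseq n + 2

/-! ### Auxiliary material -/

section Fintype

def gvEmb {n : ℕ} : GV (n + 1) → Option Bool ⊕ (Bool × Bool × GV n)
  | .root => .inl none
  | .mid b => .inl (some b)
  | .child b c x => .inr (b, c, x)

instance instFiniteGV : ∀ n, Finite (GV n)
  | 0 => Finite.of_injective (fun v : GV 0 => match v with | .base i => i)
      (by intro a b h; cases a; cases b; simpa using h)
  | n + 1 =>
    have := instFiniteGV n
    Finite.of_injective (gvEmb (n := n))
      (by intro a b h; cases a <;> cases b <;> simp [gvEmb] at h <;> simp [h])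

end Fintype

section GAdjLemmas

variable {n : ℕ} {b b' c c' : Bool} {x y : GV n} {i j : Fin 5}

@[simp] lemma gAdj_mid_child : gAdj (GV.mid b) (GV.child b' c x) = (b = b' ∧ x = rootV n) := rfl
@[simp] lemma gAdj_child_mid : gAdj (GV.child b' c x) (GV.mid b) = False := rfl
@[simp] lemma gAdj_root_mid : gAdj (GV.root : GV (n+1)) (GV.mid b) = True := rfl
@[simp] lemma gAdj_mid_root : gAdj (GV.mid b) (GV.root : GV (n+1)) = False := rfl
@[simp] lemma gAdj_child_root : gAdj (GV.child b c x) (GV.root : GV (n+1)) = False := rfl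
@[simp] lemma gAdj_root_child : gAdj (GV.root : GV (n+1)) (GV.child b c x) = False := rfl
@[simp] lemma gAdj_child_child :
    gAdj (GV.child b c x) (GV.child b' c' y) = (b = b' ∧ c = c' ∧ gAdj x y) := rfl
@[simp] lemma gAdj_root_root : gAdj (GV.root : GV (n+1)) (GV.root) = False := rfl
@[simp] lemma gAdj_mid_mid : gAdj (GV.mid b) (GV.mid b' : GV (n+1)) = False := rfl
@[simp] lemma gAdj_base_base : gAdj (GV.base i) (GV.base j) = subK4Rel i j := rfl

lemma hat_some_some {x y : GV n} :
    (hatGtree n).Adj (some x) (some y) ↔ (Gtree n).Adj x y := by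
  simp [hatGtree, Gtree, SimpleGraph.fromRel_adj, hatAdj]

@[simp] lemma hat_none_some {x : GV n} :
    (hatGtree n).Adj none (some x) ↔ x = rootV n := by
  simp [hatGtree, SimpleGraph.fromRel_adj, hatAdj]

@[simp] lemma hat_some_none {x : GV n} :
    (hatGtree n).Adj (some x) none ↔ x = rootV n := by
  rw [SimpleGraph.adj_comm]; exact hat_none_some

lemma adj_mid_child : (Gtree (n + 1)).Adj (.mid b) (.child b' c x) ↔ b = b' ∧ x = rootV n := by
  simp [Gtree, SimpleGraph.fromRel_adj]

lemma adj_child_child : (Gtree (n + 1)).Adj (.child b c x) (.child b' c' y) ↔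
      b = b' ∧ c = c' ∧ (Gtree n).Adj x y := by
  simp only [Gtree, SimpleGraph.fromRel_adj, gAdj_child_child, ne_eq]
  constructor
  · rintro ⟨hne, ⟨hb, hc, h⟩ | ⟨hb, hc, h⟩⟩
    · exact ⟨hb, hc, by subst hb; subst hc; exact ⟨fun hh => hne (by rw [hh]), Or.inl h⟩⟩
    · exact ⟨hb.symm, hc.symm, by subst hb; subst hc; exact ⟨fun hh => hne (by rw [hh]), Or.inr h⟩⟩
  · rintro ⟨hb, hc, hne, h⟩
    subst hb; subst hc
    refine ⟨by simpa using hne, ?_⟩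
    rcases h with h | h
    exacts [Or.inl ⟨rfl, rfl, h⟩, Or.inr ⟨rfl, rfl, h⟩]

lemma adj_root_mid : (Gtree (n + 1)).Adj .root (.mid b) :=
  ⟨by simp, Or.inl (by simp)⟩

lemma adj_mid_root : (Gtree (n + 1)).Adj (.mid b) .root := adj_root_mid.symm

lemma adj_root_iff {v : GV (n + 1)} :
    (Gtree (n + 1)).Adj v .root ↔ ∃ b, v = .mid b := by
  cases v with
  | root => simp
  | mid b => simp [adj_mid_root]
  | child b c z => simp [Gtree, SimpleGraph.fromRel_adj]

lemma adj_child_iff {v : GV (n + 1)} :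
    (Gtree (n + 1)).Adj (.child b c x) v ↔
      (∃ y, v = .child b c y ∧ (Gtree n).Adj x y) ∨ (v = .mid b ∧ x = rootV n) := by
  cases v with
  | root => simp [Gtree, SimpleGraph.fromRel_adj]
  | mid b' =>
    simp only [Gtree, SimpleGraph.fromRel_adj, gAdj_child_mid]
    constructor
    · rintro ⟨hne, h | h⟩
      · exact absurd h id
      · rw [gAdj_mid_child] at h
        exact Or.inr ⟨by rw [h.1], h.2⟩
    · rintro (⟨y, hy, _⟩ | ⟨hv, hx⟩)
      · exact absurd hy (by simp)
      · obtain hb' : b' = b := by simpa using hv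
        subst hb'; subst hx
        exact ⟨by simp, Or.inr (by rw [gAdj_mid_child]; exact ⟨rfl, rfl⟩)⟩
  | child b' c' y =>
    rw [adj_child_child]
    constructor
    · rintro ⟨hb, hc, h⟩
      subst hb; subst hc
      exact Or.inl ⟨y, rfl, h⟩
    · rintro (⟨y', hy, h⟩ | ⟨hv, _⟩)
      · obtain ⟨hb, hc, hyy⟩ : b' = b ∧ c' = c ∧ y = y' := by simpa using hy
        subst hb; subst hc
        exact ⟨rfl, rfl, by rw [hyy]; exact h⟩
      · exact absurd hv (by simp)

instance instDecSubK4Rel (i j : Fin 5) : Decidable (subK4Rel i j) := by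
  unfold subK4Rel; infer_instance

def K5 (i j : Fin 5) : Prop := i ≠ j ∧ (subK4Rel i j ∨ subK4Rel j i)

instance instDecK5 (i j : Fin 5) : Decidable (K5 i j) := by
  unfold K5; infer_instance

lemma adj_base_base : (Gtree 0).Adj (.base i) (.base j) ↔ K5 i j := by
  simp [Gtree, SimpleGraph.fromRel_adj, K5]

lemma gv0_cases (g : GV 0) : ∃ i, g = .base i := by
  cases g with
  | base i => exact ⟨i, rfl⟩

end GAdjLemmas

/-! ### Ordinal-indexed forcing stages -/

universe u

section Stage

variable {W : Type u} (G : SimpleGraph W) (P : Set W)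

noncomputable def stage (o : Ordinal.{u}) : Set W :=
  P ∪ {u | ∃ v, G.Adj v u ∧ v ∈ (⋃ o' < o, stage o') ∧
        ∀ w, G.Adj v w → w ≠ u → w ∈ ⋃ o' < o, stage o'}
termination_by o
decreasing_by all_goals assumption

lemma mem_stage {u : W} {o : Ordinal.{u}} :
    u ∈ stage G P o ↔ u ∈ P ∨ ∃ v, G.Adj v u ∧ (∃ o' < o, v ∈ stage G P o') ∧
      ∀ w, G.Adj v w → w ≠ u → ∃ o' < o, w ∈ stage G P o' := by
  conv_lhs => rw [stage]
  rw [Set.mem_union, Set.mem_setOf_eq]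
  simp only [Set.mem_iUnion, exists_prop]

lemma closure_stage {v : W} (h : ZFClosure G P v) : ∃ o : Ordinal.{u}, v ∈ stage G P o := by
  induction h with
  | init v hv => exact ⟨0, by rw [mem_stage]; exact Or.inl hv⟩
  | force u v hadj hv hall ihv ihall =>
    classical
    choose g hg using fun (w : W) (h : G.Adj v w ∧ w ≠ u) => ihall w h.1 h.2
    obtain ⟨ov, hov⟩ := ihv
    set g' : W → Ordinal.{u} := fun w => if h : G.Adj v w ∧ w ≠ u then g w h else 0 with hg'
    refine ⟨max (⨆ w, g' w) ov + 1, ?_⟩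
    rw [mem_stage]
    refine Or.inr ⟨v, hadj, ⟨ov, ?_, hov⟩, fun w hw hne => ⟨g' w, ?_, ?_⟩⟩
    · exact lt_of_le_of_lt (le_max_right _ _) (Order.lt_succ _)
    · exact lt_of_le_of_lt (le_trans (le_ciSup (Ordinal.bddAbove_range g') w) (le_max_left _ _))
        (Order.lt_succ _)
    · simpa [hg', dif_pos (And.intro hw hne)] using hg w ⟨hw, hne⟩

/-- `y` never forces `r`: whenever the forcing move `y → r` is enabled strictly before
stage `o`, the vertex `r` is itself already black strictly before stage `o`. -/
def Hcond (y r : W) : Prop :=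
  ∀ o : Ordinal.{u}, (∃ o' < o, y ∈ stage G P o') →
    (∀ w, G.Adj y w → w ≠ r → ∃ o' < o, w ∈ stage G P o') → ∃ o' < o, r ∈ stage G P o'

end Stage

/-! ### The fort argument -/

section Fort

variable {n : ℕ} {W : Type u} {F : SimpleGraph W} {f : Option (GV n) → W} {P : Set W}

lemma fort_white (hinj : Function.Injective f)
    (hind : ∀ x y, F.Adj (f x) (f y) ↔ (hatGtree n).Adj x y)
    (hsep : ∀ (a : GV n) (w : W), w ∉ Set.range f → ¬ F.Adj (f (some a)) w)
    (R : Set (GV n))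
    (hRP : ∀ g ∈ R, f (some g) ∉ P)
    (hfort : ∀ h g, g ∈ R → h ∉ R → (Gtree n).Adj h g → ∃ w ∈ R, w ≠ g ∧ (Gtree n).Adj h w)
    (hroot : rootV n ∈ R → Hcond F P (f none) (f (some (rootV n))))
    (o : Ordinal.{u}) : ∀ g ∈ R, f (some g) ∉ stage F P o := by
  induction o using Ordinal.induction with
  | h o IH =>
    intro g hg hmem
    rw [mem_stage] at hmem
    rcases hmem with hmem | ⟨v, hadj, hv, hall⟩
    · exact hRP g hg hmem
    · have hvr : v ∈ Set.range f := by
        by_contra hvr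
        exact hsep g v hvr hadj.symm
      obtain ⟨x, rfl⟩ := hvr
      cases x with
      | none =>
        have hgr : g = rootV n := by simpa using (hind none (some g)).1 hadj
        subst hgr
        obtain ⟨o', ho', hro⟩ := hroot hg o hv (fun w hw hne => hall w hw hne)
        exact IH o' ho' _ hg hro
      | some h =>
        have hhR : h ∉ R := by
          intro hh
          obtain ⟨o', ho', hmem'⟩ := hv
          exact IH o' ho' h hh hmem'
        have hadj' : (Gtree n).Adj h g := hat_some_some.1 ((hind (some h) (some g)).1 hadj)
        obtain ⟨w, hwR, hwne, hwadj⟩ := hfort h g hg hhR hadj'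
        have hFadj : F.Adj (f (some h)) (f (some w)) := (hind _ _).2 (hat_some_some.2 hwadj)
        have hne : f (some w) ≠ f (some g) := fun hh => hwne (by simpa using hinj hh)
        obtain ⟨o', ho', hmem'⟩ := hall _ hFadj hne
        exact IH o' ho' w hwR hmem'

lemma fort_false (hinj : Function.Injective f)
    (hind : ∀ x y, F.Adj (f x) (f y) ↔ (hatGtree n).Adj x y)
    (hsep : ∀ (a : GV n) (w : W), w ∉ Set.range f → ¬ F.Adj (f (some a)) w)
    (hP : IsZeroForcingSet F P)
    (R : Set (GV n)) (hne : R.Nonempty)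
    (hRP : ∀ g ∈ R, f (some g) ∉ P)
    (hfort : ∀ h g, g ∈ R → h ∉ R → (Gtree n).Adj h g → ∃ w ∈ R, w ≠ g ∧ (Gtree n).Adj h w)
    (hroot : rootV n ∈ R → Hcond F P (f none) (f (some (rootV n)))) : False := by
  obtain ⟨g, hg⟩ := hne
  obtain ⟨o, ho⟩ := closure_stage F P (hP (f (some g)))
  exact fort_white hinj hind hsep R hRP hfort hroot o g hg ho

end Fort

section Base

variable {W : Type u} {F : SimpleGraph W} {f : Option (GV 0) → W} {P : Set W}

lemma fort0_false (hinj : Function.Injective f)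
    (hind : ∀ x y, F.Adj (f x) (f y) ↔ (hatGtree 0).Adj x y)
    (hsep : ∀ (a : GV 0) (w : W), w ∉ Set.range f → ¬ F.Adj (f (some a)) w)
    (hP : IsZeroForcingSet F P)
    (l : List (Fin 5)) (hne : l ≠ [])
    (hlP : ∀ i ∈ l, f (some (.base i)) ∉ P)
    (hfort : ∀ i j : Fin 5, j ∈ l → i ∉ l → K5 i j → ∃ w, w ∈ l ∧ w ≠ j ∧ K5 i w)
    (hroot : (3 : Fin 5) ∈ l → Hcond F P (f none) (f (some (rootV 0)))) : False := by
  apply fort_false hinj hind hsep hP (R := {g | ∃ i ∈ l, g = .base i})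
  · obtain ⟨i, hi⟩ := List.exists_mem_of_ne_nil l hne
    exact ⟨.base i, i, hi, rfl⟩
  · rintro g ⟨i, hi, rfl⟩
    exact hlP i hi
  · intro h g hg hh hadj
    obtain ⟨i, rfl⟩ := gv0_cases h
    obtain ⟨j, hj, rfl⟩ := hg
    have hi : i ∉ l := fun hmem => hh ⟨i, hmem, rfl⟩
    obtain ⟨w, hw, hwj, hKw⟩ := hfort i j hj hi (adj_base_base.1 hadj)
    exact ⟨.base w, ⟨w, hw, rfl⟩, fun hc => hwj (by simpa using hc), adj_base_base.2 hKw⟩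
  · rintro ⟨i, hi, heq⟩
    have h3 : i = 3 := by simpa [rootV] using heq.symm
    exact hroot (h3 ▸ hi)

lemma base_bound (hinj : Function.Injective f)
    (hind : ∀ x y, F.Adj (f x) (f y) ↔ (hatGtree 0).Adj x y)
    (hsep : ∀ (a : GV 0) (w : W), w ∉ Set.range f → ¬ F.Adj (f (some a)) w)
    (hP : IsZeroForcingSet F P) :
    2 ≤ ((Set.range fun a : GV 0 => f (some a)) ∩ P).ncard ∧
    (Hcond F P (f none) (f (some (rootV 0))) →
      3 ≤ ((Set.range fun a : GV 0 => f (some a)) ∩ P).ncard) := by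
  classical
  set gad := (Set.range fun a : GV 0 => f (some a)) ∩ P with hgad
  have hfin : gad.Finite := (Set.finite_range _).inter_of_left P
  have h1 : ∃ i : Fin 5, (i = 0 ∨ i = 1) ∧ f (some (.base i)) ∈ P := by
    by_contra hq
    push_neg at hq
    refine fort0_false hinj hind hsep hP [0, 1] (by simp) ?_ (by decide) ?_
    · intro i hi
      refine hq i ?_
      simpa using hi
    · intro h3; exact absurd h3 (by decide)
  have h2 : ∃ j : Fin 5, (j = 2 ∨ j = 4) ∧ f (some (.base j)) ∈ P := by
    by_contra hq
    push_neg at hq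
    refine fort0_false hinj hind hsep hP [2, 4] (by simp) ?_ (by decide) ?_
    · intro i hi
      refine hq i ?_
      simpa using hi
    · intro h3; exact absurd h3 (by decide)
  obtain ⟨i, hi, hiP⟩ := h1
  obtain ⟨j, hj, hjP⟩ := h2
  have hij : i ≠ j := by rcases hi with rfl | rfl <;> rcases hj with rfl | rfl <;> decide
  have hneq : f (some (GV.base i)) ≠ f (some (GV.base j)) := by
    intro hc
    exact hij (by simpa using hinj hc)
  have hsub : ({f (some (.base i)), f (some (.base j))} : Set W) ⊆ gad := by
    rintro x (rfl | rfl)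
    · exact ⟨⟨.base i, rfl⟩, hiP⟩
    · exact ⟨⟨.base j, rfl⟩, hjP⟩
  have hcard2 : ({f (some (.base i)), f (some (.base j))} : Set W).ncard = 2 :=
    Set.ncard_pair hneq
  constructor
  · calc 2 = ({f (some (.base i)), f (some (.base j))} : Set W).ncard := hcard2.symm
      _ ≤ gad.ncard := Set.ncard_le_ncard hsub hfin
  · intro Hc
    by_contra hlt
    push_neg at hlt
    have hle2 : gad.ncard ≤ 2 := by omega
    have heq : ({f (some (.base i)), f (some (.base j))} : Set W) = gad :=
      Set.eq_of_subset_of_ncard_le hsub (by omega) hfin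
    -- any vertex of the gadget in P is `base i` or `base j`
    have hmem : ∀ k : Fin 5, f (some (.base k)) ∈ P → k = i ∨ k = j := by
      intro k hk
      have : f (some (.base k)) ∈ gad := ⟨⟨.base k, rfl⟩, hk⟩
      rw [← heq] at this
      rcases this with hc | hc
      · exact Or.inl (by simpa using hinj hc)
      · exact Or.inr (by simpa using hinj hc)
    -- choose the root fort avoiding i and j
    have hmain : ∀ l : List (Fin 5), l ≠ [] → (3 : Fin 5) ∈ l →
        (∀ i' j' : Fin 5, j' ∈ l → i' ∉ l → K5 i' j' → ∃ w, w ∈ l ∧ w ≠ j' ∧ K5 i' w) →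
        i ∉ l → j ∉ l → False := by
      intro l hlne h3l hfortl hil hjl
      refine fort0_false hinj hind hsep hP l hlne ?_ hfortl (fun _ => Hc)
      intro k hk hkP
      rcases hmem k hkP with rfl | rfl
      · exact hil hk
      · exact hjl hk
    rcases hi with rfl | rfl <;> rcases hj with rfl | rfl
    · exact hmain [3, 1, 4] (by simp) (by decide) (by decide) (by decide) (by decide)
    · exact hmain [3, 1, 2] (by simp) (by decide) (by decide) (by decide) (by decide)
    · exact hmain [3, 0, 4] (by simp) (by decide) (by decide) (by decide) (by decide)
    · exact hmain [3, 0, 2] (by simp) (by decide) (by decide) (by decide) (by decide)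

end Base

/-! ### Counting helper -/

lemma ncard_five {α : Type*} {s1 s2 s3 s4 e t : Set α}
    (h1 : s1 ⊆ t) (h2 : s2 ⊆ t) (h3 : s3 ⊆ t) (h4 : s4 ⊆ t) (he : e ⊆ t)
    (d12 : Disjoint s1 s2) (d13 : Disjoint s1 s3) (d14 : Disjoint s1 s4)
    (d23 : Disjoint s2 s3) (d24 : Disjoint s2 s4) (d34 : Disjoint s3 s4)
    (de1 : Disjoint s1 e) (de2 : Disjoint s2 e) (de3 : Disjoint s3 e) (de4 : Disjoint s4 e)
    (ht : t.Finite) :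
    s1.ncard + s2.ncard + s3.ncard + s4.ncard + e.ncard ≤ t.ncard := by
  have f1 := ht.subset h1; have f2 := ht.subset h2; have f3 := ht.subset h3
  have f4 := ht.subset h4; have fe := ht.subset he
  have e12 : (s1 ∪ s2).ncard = s1.ncard + s2.ncard := Set.ncard_union_eq d12 f1 f2
  have e123 : (s1 ∪ s2 ∪ s3).ncard = s1.ncard + s2.ncard + s3.ncard := by
    rw [Set.ncard_union_eq (d13.union_left d23) (f1.union f2) f3, e12]
  have e1234 : (s1 ∪ s2 ∪ s3 ∪ s4).ncard = s1.ncard + s2.ncard + s3.ncard + s4.ncard := by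
    rw [Set.ncard_union_eq ((d14.union_left d24).union_left d34) ((f1.union f2).union f3) f4,
      e123]
  have e12345 : (s1 ∪ s2 ∪ s3 ∪ s4 ∪ e).ncard
      = s1.ncard + s2.ncard + s3.ncard + s4.ncard + e.ncard := by
    rw [Set.ncard_union_eq (((de1.union_left de2).union_left de3).union_left de4)
      (((f1.union f2).union f3).union f4) fe, e1234]
  calc s1.ncard + s2.ncard + s3.ncard + s4.ncard + e.ncard
      = (s1 ∪ s2 ∪ s3 ∪ s4 ∪ e).ncard := e12345.symm
    _ ≤ t.ncard := Set.ncard_le_ncard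
        (Set.union_subset (Set.union_subset (Set.union_subset (Set.union_subset h1 h2) h3) h4) he)
        ht

/-! ### The copy embeddings -/

def fkdef {n : ℕ} {W : Type u} (f : Option (GV (n + 1)) → W) (b c : Bool) :
    Option (GV n) → W :=
  fun x => f (some (x.elim (GV.mid b) (fun a => GV.child b c a)))

section Step

variable {n : ℕ} {W : Type u} {F : SimpleGraph W} {f : Option (GV (n + 1)) → W} {P : Set W}

lemma fk_inj (hinj : Function.Injective f) (b c : Bool) :
    Function.Injective (fkdef f b c) := by
  intro x y h
  have h2 : (x.elim (GV.mid b) (fun a => GV.child b c a))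
      = (y.elim (GV.mid b) (fun a => GV.child b c a)) := by
    simpa using hinj h
  cases x with
  | none =>
    cases y with
    | none => rfl
    | some a => exact absurd h2 (by simp)
  | some a =>
    cases y with
    | none => exact absurd h2 (by simp)
    | some a' =>
      obtain ⟨-, -, ha⟩ : b = b ∧ c = c ∧ a = a' := by simpa using h2
      rw [ha]

lemma fk_ind (hind : ∀ x y, F.Adj (f x) (f y) ↔ (hatGtree (n + 1)).Adj x y) (b c : Bool) :
    ∀ x y, F.Adj (fkdef f b c x) (fkdef f b c y) ↔ (hatGtree n).Adj x y := by
  intro x y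
  cases x with
  | none =>
    cases y with
    | none => exact ⟨fun h => absurd rfl h.ne, fun h => absurd rfl h.ne⟩
    | some a =>
      show F.Adj (f (some (.mid b))) (f (some (.child b c a))) ↔ _
      rw [hind, hat_some_some, adj_mid_child, hat_none_some]
      simp
  | some a =>
    cases y with
    | none =>
      show F.Adj (f (some (.child b c a))) (f (some (.mid b))) ↔ _
      rw [hind, hat_some_some, (Gtree (n + 1)).adj_comm, adj_mid_child, hat_some_none]
      simp
    | some a' =>
      show F.Adj (f (some (.child b c a))) (f (some (.child b c a'))) ↔ _
      rw [hind, hat_some_some, adj_child_child, hat_some_some]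
      simp

lemma fk_sep (hind : ∀ x y, F.Adj (f x) (f y) ↔ (hatGtree (n + 1)).Adj x y)
    (hsep : ∀ (a : GV (n + 1)) (w : W), w ∉ Set.range f → ¬ F.Adj (f (some a)) w) (b c : Bool) :
    ∀ (a : GV n) (w : W), w ∉ Set.range (fkdef f b c) → ¬ F.Adj (fkdef f b c (some a)) w := by
  intro a w hw hadj
  have hadj' : F.Adj (f (some (.child b c a))) w := hadj
  have hwr : w ∈ Set.range f := by
    by_contra h
    exact hsep (GV.child b c a) w h hadj'
  obtain ⟨x, rfl⟩ := hwr
  have hhat := (hind (some (.child b c a)) x).1 hadj'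
  cases x with
  | none =>
    rw [hat_some_none] at hhat
    exact absurd hhat (by simp [rootV])
  | some v =>
    rw [hat_some_some, adj_child_iff] at hhat
    rcases hhat with ⟨y, rfl, -⟩ | ⟨rfl, -⟩
    · exact hw ⟨some y, rfl⟩
    · exact hw ⟨none, rfl⟩

end Step

theorem main_bound : ∀ (n : ℕ) {W : Type u} (F : SimpleGraph W) (f : Option (GV n) → W),
    Function.Injective f →
    (∀ x y, F.Adj (f x) (f y) ↔ (hatGtree n).Adj x y) →
    (∀ (a : GV n) (w : W), w ∉ Set.range f → ¬ F.Adj (f (some a)) w) →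
    ∀ (P : Set W), IsZeroForcingSet F P →
    tseq n ≤ ((Set.range fun a : GV n => f (some a)) ∩ P).ncard ∧
    (Hcond F P (f none) (f (some (rootV n))) →
      tseq n + 1 ≤ ((Set.range fun a : GV n => f (some a)) ∩ P).ncard) := by
  intro n
  induction n with
  | zero =>
    intro W F f hinj hind hsep P hP
    exact base_bound hinj hind hsep hP
  | succ n IH =>
    intro W F f hinj hind hsep P hP
    classical
    -- the four copies
    have IHk := fun b c => IH F (fkdef f b c) (fk_inj hinj b c) (fk_ind hind b c)
      (fk_sep hind hsep b c) P hP
    have hcard : ∀ b c,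
        tseq n ≤ ((Set.range fun a : GV n => fkdef f b c (some a)) ∩ P).ncard :=
      fun b c => (IHk b c).1
    have hcardH : ∀ b c, Hcond F P (fkdef f b c none) (fkdef f b c (some (rootV n))) →
        tseq n + 1 ≤ ((Set.range fun a : GV n => fkdef f b c (some a)) ∩ P).ncard :=
      fun b c => (IHk b c).2
    -- basic adjacency facts
    have hfne : ∀ {x y : Option (GV (n + 1))}, x ≠ y → f x ≠ f y :=
      fun h hc => h (hinj hc)
    have hMadj : ∀ b c, F.Adj (fkdef f b c none) (fkdef f b c (some (rootV n))) := by
      intro b c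
      show F.Adj (f (some (.mid b))) (f (some (.child b c (rootV n))))
      exact (hind _ _).2 (hat_some_some.2 (adj_mid_child.2 ⟨rfl, rfl⟩))
    -- at most one failing copy per side
    have hside : ∀ b, Hcond F P (fkdef f b false none) (fkdef f b false (some (rootV n))) ∨
        Hcond F P (fkdef f b true none) (fkdef f b true (some (rootV n))) := by
      intro b
      by_contra hcon
      push_neg at hcon
      obtain ⟨h0, h1⟩ := hcon
      unfold Hcond at h0 h1
      push_neg at h0 h1
      obtain ⟨o0, hA0, hB0, hC0⟩ := h0
      obtain ⟨o1, hA1, hB1, hC1⟩ := h1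
      rcases le_total o0 o1 with hle | hle
      · obtain ⟨o', ho', hst⟩ := hB0 _ (hMadj b true) (hfne (by simp))
        exact hC1 o' (lt_of_lt_of_le ho' hle) hst
      · obtain ⟨o', ho', hst⟩ := hB1 _ (hMadj b false) (hfne (by simp))
        exact hC0 o' (lt_of_lt_of_le ho' hle) hst
    -- per-side cardinality bound
    have hs : ∀ b, 2 * tseq n + 1 ≤
        ((Set.range fun a : GV n => fkdef f b false (some a)) ∩ P).ncard +
        ((Set.range fun a : GV n => fkdef f b true (some a)) ∩ P).ncard := by
      intro b
      rcases hside b with h | h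
      · have g1 := hcardH b false h
        have g2 := hcard b true
        omega
      · have g1 := hcardH b true h
        have g2 := hcard b false
        omega
    -- counting set-up
    have hfinG : ((Set.range fun a : GV (n + 1) => f (some a)) ∩ P).Finite :=
      (Set.finite_range _).inter_of_left P
    have hsubC : ∀ b c, (Set.range fun a : GV n => fkdef f b c (some a)) ∩ P
        ⊆ (Set.range fun a : GV (n + 1) => f (some a)) ∩ P := by
      rintro b c x ⟨⟨a, rfl⟩, hx⟩
      exact ⟨⟨.child b c a, rfl⟩, hx⟩
    have hdisjC : ∀ b c b' c', (b, c) ≠ (b', c') →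
        Disjoint ((Set.range fun a : GV n => fkdef f b c (some a)) ∩ P)
          ((Set.range fun a : GV n => fkdef f b' c' (some a)) ∩ P) := by
      intro b c b' c' hne
      rw [Set.disjoint_left]
      rintro x ⟨⟨a, rfl⟩, -⟩ ⟨⟨a', ha'⟩, -⟩
      have hchild : GV.child b' c' a' = GV.child b c a := by
        have := hinj ha'
        simpa using this
      obtain ⟨hb, hc, -⟩ : b' = b ∧ c' = c ∧ a' = a := by simpa using hchild
      exact hne (by rw [hb, hc])
    have k4 : ((Set.range fun a : GV n => fkdef f false false (some a)) ∩ P).ncard +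
        ((Set.range fun a : GV n => fkdef f false true (some a)) ∩ P).ncard +
        ((Set.range fun a : GV n => fkdef f true false (some a)) ∩ P).ncard +
        ((Set.range fun a : GV n => fkdef f true true (some a)) ∩ P).ncard
        ≤ ((Set.range fun a : GV (n + 1) => f (some a)) ∩ P).ncard := by
      have := ncard_five (e := (∅ : Set W)) (hsubC false false) (hsubC false true)
        (hsubC true false) (hsubC true true) (Set.empty_subset _)
        (hdisjC _ _ _ _ (by simp)) (hdisjC _ _ _ _ (by simp)) (hdisjC _ _ _ _ (by simp))
        (hdisjC _ _ _ _ (by simp)) (hdisjC _ _ _ _ (by simp)) (hdisjC _ _ _ _ (by simp))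
        (Set.disjoint_empty _) (Set.disjoint_empty _) (Set.disjoint_empty _) (Set.disjoint_empty _) hfinG
      simpa using this
    constructor
    · have h0 := hs false
      have h1 := hs true
      show 4 * tseq n + 2 ≤ _
      omega
    · intro Hc
      show 4 * tseq n + 2 + 1 ≤ _
      by_cases hrP : f (some (.root : GV (n + 1))) ∈ P
      · -- the root is an extra element of the gadget intersection
        have hrsub : ({f (some (.root : GV (n + 1)))} : Set W)
            ⊆ (Set.range fun a : GV (n + 1) => f (some a)) ∩ P :=
          Set.singleton_subset_iff.2 ⟨⟨.root, rfl⟩, hrP⟩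
        have hrdisj : ∀ b c,
            Disjoint ((Set.range fun a : GV n => fkdef f b c (some a)) ∩ P)
              ({f (some (.root : GV (n + 1)))} : Set W) := by
          intro b c
          rw [Set.disjoint_singleton_right]
          rintro ⟨⟨a, ha⟩, -⟩
          have : GV.child b c a = GV.root := by simpa using hinj ha
          exact absurd this (by simp)
        have k5 := ncard_five (hsubC false false) (hsubC false true)
          (hsubC true false) (hsubC true true) hrsub
          (hdisjC _ _ _ _ (by simp)) (hdisjC _ _ _ _ (by simp)) (hdisjC _ _ _ _ (by simp))
          (hdisjC _ _ _ _ (by simp)) (hdisjC _ _ _ _ (by simp)) (hdisjC _ _ _ _ (by simp))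
          (hrdisj false false) (hrdisj false true) (hrdisj true false) (hrdisj true true) hfinG
        rw [Set.ncard_singleton] at k5
        have h0 := hs false
        have h1 := hs true
        omega
      · -- the root gets forced by some middle vertex; on that side both copies are good
        obtain ⟨o, hro⟩ := closure_stage F P (hP (f (some (.root : GV (n + 1)))))
        have hsne : {o : Ordinal | f (some (.root : GV (n + 1))) ∈ stage F P o}.Nonempty :=
          ⟨o, hro⟩
        set om := (wellFounded_lt (α := Ordinal)).min _ hsne with hom
        have hom_mem : f (some (.root : GV (n + 1))) ∈ stage F P om :=
          (wellFounded_lt (α := Ordinal)).min_mem _ hsne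
        have hom_min : ∀ o' < om, f (some (.root : GV (n + 1))) ∉ stage F P o' :=
          fun o' hlt hmem => (wellFounded_lt (α := Ordinal)).not_lt_min _ hmem hlt
        rw [mem_stage] at hom_mem
        rcases hom_mem with h | ⟨v, hadj, hv, hall⟩
        · exact absurd h hrP
        · have hvr : v ∈ Set.range f := by
            by_contra h
            exact hsep (.root) v h hadj.symm
          obtain ⟨x, rfl⟩ := hvr
          cases x with
          | none =>
            obtain ⟨o', ho', hr'⟩ := Hc om hv hall
            exact absurd hr' (hom_min o' ho')
          | some v' =>
            have hhat := hat_some_some.1 ((hind (some v') (some .root)).1 hadj)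
            obtain ⟨b', rfl⟩ := adj_root_iff.1 hhat
            have hrc : ∀ c, ∃ o' < om, f (some (.child b' c (rootV n))) ∈ stage F P o' := by
              intro c
              exact hall _ (hMadj b' c) (hfne (by simp))
            have hgood : ∀ c,
                Hcond F P (fkdef f b' c none) (fkdef f b' c (some (rootV n))) := by
              intro c
              by_contra hbad
              unfold Hcond at hbad
              push_neg at hbad
              obtain ⟨o2, hA, hB, hC⟩ := hbad
              have hmr : F.Adj (fkdef f b' c none) (f (some (.root : GV (n + 1)))) := by
                show F.Adj (f (some (.mid b'))) _
                exact (hind _ _).2 (hat_some_some.2 adj_mid_root)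
              obtain ⟨o3, ho3, hr3⟩ := hB _ hmr (hfne (by simp))
              have hle : om ≤ o3 := not_lt.1 (fun hlt => hom_min o3 hlt hr3)
              obtain ⟨o4, ho4, hc4⟩ := hrc c
              exact hC o4 (lt_trans (lt_of_lt_of_le ho4 hle) ho3) hc4
            have e0 := hcardH b' false (hgood false)
            have e1 := hcardH b' true (hgood true)
            cases b' with
            | false =>
              have h1 := hs true
              omega
            | true =>
              have h0 := hs false
              omega


/-- Lemma 1(i): if `F` contains `Ĝ_{n+1}` as an induced subgraph (via the injection
`f`) with no edge between `V(G_{n+1})` and the vertices of `F` outside the copy of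
`Ĝ_{n+1}`, then every zero forcing set `P` of `F` satisfies
`|V(G_{n+1}) ∩ P| ≥ t_{n+1}`. -/
theorem tree_lower_bound_i (n : ℕ) {W : Type*} (F : SimpleGraph W)
    (f : Option (GV n) → W) (hinj : Function.Injective f)
    (hind : ∀ x y, F.Adj (f x) (f y) ↔ (hatGtree n).Adj x y)
    (hsep : ∀ (a : GV n) (w : W), w ∉ Set.range f → ¬ F.Adj (f (some a)) w)
    (P : Set W) (hP : IsZeroForcingSet F P) :
    tseq n ≤ ((Set.range fun a : GV n => f (some a)) ∩ P).ncard :=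
  (main_bound n F f hinj hind hsep P hP).1
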